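/- Let k ≥ 2 and let φ : ℝ → ℝ be k times continuously differentiable on an interval I with φ^(k)(t) ≠ 0 for all t ∈ I. Suppose t₁, t₁' ∈ I with t₁ ≠ t₁' and t₁ + Y − t₁' ∈ I for all relevant Y. Then the function f(Y) := φ(t₁ + Y − t₁') − φ(t₁) − φ(Y) + φ(t₁') has at most k − 1 distinct zeros in I. -/

import Mathlib

open Set

/-- The derivative of `y ↦ ψ (y + s) - ψ y - c` at an interior point. -/
lemma sod_deriv_shift_sub {a b s c : ℝ} {ψ : ℝ → ℝ} {m : ℕ} (hm : 1 ≤ m)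
    (hψ : ContDiffOn ℝ m ψ (Set.Icc a b)) {u : ℝ} (hu : u ∈ Set.Ioo a b)
    (hus : u + s ∈ Set.Ioo a b) :
    HasDerivAt (fun y => ψ (y + s) - ψ y - c)
      (derivWithin ψ (Set.Icc a b) (u + s) - derivWithin ψ (Set.Icc a b) u) u := by
  have h1 : Set.Icc a b ∈ nhds (u + s) := Icc_mem_nhds hus.1 hus.2
  have h2 : Set.Icc a b ∈ nhds u := Icc_mem_nhds hu.1 hu.2
  have d1 : DifferentiableAt ℝ ψ (u + s) :=
    (hψ.contDiffAt h1).differentiableAt (by exact_mod_cast (show m ≠ 0 by omega))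
  have d2 : DifferentiableAt ℝ ψ u :=
    (hψ.contDiffAt h2).differentiableAt (by exact_mod_cast (show m ≠ 0 by omega))
  have H := ((d1.hasDerivAt.comp_add_const u s).sub d2.hasDerivAt).sub_const c
  rwa [derivWithin_of_mem_nhds h1, derivWithin_of_mem_nhds h2]

/-- Rolle counting step: from `n+2` solutions of `ψ (y+s) - ψ y = c` we get `n+1`
interlaced critical points. -/
lemma sod_rolle_finset {a b s c : ℝ} {ψ : ℝ → ℝ} (hψc : ContinuousOn ψ (Set.Icc a b))
    (n : ℕ) (S : Finset ℝ) (hcard : n + 2 ≤ S.card)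
    (hS : ∀ y ∈ S, y ∈ Set.Icc a b ∧ y + s ∈ Set.Icc a b ∧ ψ (y + s) - ψ y = c) :
    ∃ T : Finset ℝ, T.card = n + 1 ∧ ∀ u ∈ T, u ∈ Set.Ioo a b ∧ u + s ∈ Set.Ioo a b ∧
      deriv (fun y => ψ (y + s) - ψ y - c) u = 0 := by
  set g : ℝ → ℝ := fun y => ψ (y + s) - ψ y - c with hg
  set e := S.orderEmbOfFin (rfl : S.card = S.card) with he
  have hi0 : ∀ i : Fin (n + 1), (i : ℕ) < S.card := fun i => by omega
  have hi1 : ∀ i : Fin (n + 1), (i : ℕ) + 1 < S.card := fun i => by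
    have := i.isLt; omega
  have hmem : ∀ j : Fin S.card, (e j) ∈ S := fun j => S.orderEmbOfFin_mem rfl j
  have H : ∀ i : Fin (n + 1), ∃ u,
      u ∈ Set.Ioo (e ⟨i, hi0 i⟩) (e ⟨(i : ℕ) + 1, hi1 i⟩) ∧ deriv g u = 0 := by
    intro i
    set p := e ⟨i, hi0 i⟩ with hp
    set q := e ⟨(i : ℕ) + 1, hi1 i⟩ with hq
    have hpq : p < q := e.strictMono (by simp [Fin.lt_def])
    obtain ⟨hpab, hpsab, hpv⟩ := hS p (hmem _)
    obtain ⟨hqab, hqsab, hqv⟩ := hS q (hmem _)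
    have hsub : Set.Icc p q ⊆ Set.Icc a b := Set.Icc_subset_Icc hpab.1 hqab.2
    have cont1 : ContinuousOn (fun y => ψ (y + s)) (Set.Icc p q) := by
      apply hψc.comp ((continuous_add_right s).continuousOn)
      intro y hy
      show y + s ∈ Set.Icc a b
      exact ⟨by linarith [hpsab.1, hy.1], by linarith [hqsab.2, hy.2]⟩
    have contg : ContinuousOn g (Set.Icc p q) :=
      (cont1.sub (hψc.mono hsub)).sub continuousOn_const
    have hgp : g p = 0 := by simp [hg, hpv, sub_eq_zero]
    have hgq : g q = 0 := by simp [hg, hqv, sub_eq_zero]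
    exact exists_deriv_eq_zero hpq contg (hgp.trans hgq.symm)
  choose u hu hdu using H
  have hmono : StrictMono u := by
    intro i j hij
    calc u i < e ⟨(i : ℕ) + 1, hi1 i⟩ := (hu i).2
    _ ≤ e ⟨(j : ℕ), hi0 j⟩ := e.monotone (by simp [Fin.le_def]; omega)
    _ < u j := (hu j).1
  refine ⟨Finset.image u Finset.univ, ?_, ?_⟩
  · rw [Finset.card_image_of_injective _ hmono.injective, Finset.card_univ, Fintype.card_fin]
  · intro x hx
    obtain ⟨i, _, rfl⟩ := Finset.mem_image.1 hx
    obtain ⟨hpab, hpsab, -⟩ := hS _ (hmem ⟨i, hi0 i⟩)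
    obtain ⟨hqab, hqsab, -⟩ := hS _ (hmem ⟨(i : ℕ) + 1, hi1 i⟩)
    obtain ⟨h1, h2⟩ := hu i
    refine ⟨⟨by linarith [hpab.1], by linarith [hqab.2]⟩,
      ⟨by linarith [hpsab.1], by linarith [hqsab.2]⟩, hdu i⟩

/-- Key lemma: if `ψ` is `C^(n+2)` with nonvanishing `(n+2)`-th derivative on `[a,b]`,
then `ψ (y+s) - ψ y = c` has at most `n+1` solutions (with `s ≠ 0`). -/
lemma sod_key {a b : ℝ} (n : ℕ) :
    ∀ ψ : ℝ → ℝ, ContDiffOn ℝ (n + 2) ψ (Set.Icc a b) →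
    (∀ t ∈ Set.Icc a b, iteratedDerivWithin (n + 2) ψ (Set.Icc a b) t ≠ 0) →
    ∀ s : ℝ, s ≠ 0 → ∀ c : ℝ, ∀ S : Finset ℝ,
    (∀ y ∈ S, y ∈ Set.Icc a b ∧ y + s ∈ Set.Icc a b ∧ ψ (y + s) - ψ y = c) →
    S.card ≤ n + 1 := by
  induction n with
  | zero =>
    intro ψ hψ hnd s hs c S hS
    by_contra hlt
    have hcard : 0 + 2 ≤ S.card := by omega
    -- a < b since S has two distinct elements in [a, b]
    have hab : a < b := by
      obtain ⟨x, hx, y, hy, hxy⟩ := Finset.one_lt_card.1 (by omega : 1 < S.card)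
      have h1 := (hS x hx).1
      have h2 := (hS y hy).1
      rcases lt_or_gt_of_ne hxy with h | h
      · linarith [h1.1, h2.2]
      · linarith [h2.1, h1.2]
    obtain ⟨T, hTcard, hT⟩ := sod_rolle_finset hψ.continuousOn 0 S hcard hS
    obtain ⟨u, huT⟩ := Finset.card_pos.1 (by omega : 0 < T.card)
    obtain ⟨hu, hus, hder⟩ := hT u huT
    set ψ₁ := derivWithin ψ (Set.Icc a b) with hψ₁def
    have hval : ψ₁ (u + s) - ψ₁ u = 0 := by
      rw [← (sod_deriv_shift_sub (c := c) (m := 2) (by norm_num) hψ hu hus).deriv]; exact hder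
    have hψ₁ : ContDiffOn ℝ 1 ψ₁ (Set.Icc a b) :=
      hψ.derivWithin (uniqueDiffOn_Icc hab) (by norm_num)
    -- two distinct points where ψ₁ agrees
    obtain ⟨p, q, hpq, hpa, hpb, hqa, hqb, hval'⟩ :
        ∃ p q : ℝ, p < q ∧ a < p ∧ p < b ∧ a < q ∧ q < b ∧ ψ₁ p = ψ₁ q := by
      rcases lt_or_gt_of_ne (fun h : u = u + s => hs (by linarith)) with h | h
      · exact ⟨u, u + s, h, hu.1, hu.2, hus.1, hus.2, by linarith [sub_eq_zero.1 hval]⟩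
      · exact ⟨u + s, u, h, hus.1, hus.2, hu.1, hu.2, by linarith [sub_eq_zero.1 hval]⟩
    obtain ⟨v, hv, hdv⟩ := exists_deriv_eq_zero hpq
      (hψ₁.continuousOn.mono (Set.Icc_subset_Icc hpa.le hqb.le)) hval'
    have hvab : v ∈ Set.Ioo a b := ⟨lt_trans hpa hv.1, lt_trans hv.2 hqb⟩
    have hvIcc : v ∈ Set.Icc a b := ⟨hvab.1.le, hvab.2.le⟩
    have hnb : Set.Icc a b ∈ nhds v := Icc_mem_nhds hvab.1 hvab.2
    have hdiff : DifferentiableAt ℝ ψ₁ v :=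
      (hψ₁.contDiffAt hnb).differentiableAt (by norm_num)
    apply hnd v hvIcc
    rw [iteratedDerivWithin_succ',
      iteratedDerivWithin_one,
      ← hψ₁def, derivWithin_of_mem_nhds hnb]
    exact hdv
  | succ n IH =>
    intro ψ hψ hnd s hs c S hS
    by_contra hlt
    have hcard : n + 1 + 2 ≤ S.card := by omega
    have hab : a < b := by
      obtain ⟨x, hx, y, hy, hxy⟩ := Finset.one_lt_card.1 (by omega : 1 < S.card)
      have h1 := (hS x hx).1
      have h2 := (hS y hy).1
      rcases lt_or_gt_of_ne hxy with h | h
      · linarith [h1.1, h2.2]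
      · linarith [h2.1, h1.2]
    obtain ⟨T, hTcard, hT⟩ := sod_rolle_finset hψ.continuousOn (n + 1) S hcard hS
    set ψ₁ := derivWithin ψ (Set.Icc a b) with hψ₁def
    have hψ₁ : ContDiffOn ℝ (n + 2) ψ₁ (Set.Icc a b) := by
      apply hψ.derivWithin (uniqueDiffOn_Icc hab)
      exact_mod_cast (by omega : n + 2 + 1 ≤ n + 1 + 2)
    have hnd₁ : ∀ t ∈ Set.Icc a b, iteratedDerivWithin (n + 2) ψ₁ (Set.Icc a b) t ≠ 0 := by
      intro t ht
      rw [← iteratedDerivWithin_succ']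
      exact hnd t ht
    have hT' : ∀ u ∈ T, u ∈ Set.Icc a b ∧ u + s ∈ Set.Icc a b ∧ ψ₁ (u + s) - ψ₁ u = 0 := by
      intro u huT
      obtain ⟨hu, hus, hder⟩ := hT u huT
      refine ⟨⟨hu.1.le, hu.2.le⟩, ⟨hus.1.le, hus.2.le⟩, ?_⟩
      rw [← (sod_deriv_shift_sub (c := c) (m := n + 3) (by omega) hψ hu hus).deriv]
      exact hder
    have hfin := IH ψ₁ hψ₁ hnd₁ s hs 0 T hT'
    rw [hTcard] at hfin
    omega

theorem sod_function_zeros_bound (k : ℕ) (hk : 2 ≤ k) (a b : ℝ) (hab : a < b)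
    (φ : ℝ → ℝ) (hφ : ContDiffOn ℝ k φ (Set.Icc a b))
    (hnd : ∀ t ∈ Set.Icc a b, iteratedDerivWithin k φ (Set.Icc a b) t ≠ 0)
    (t₁ t₁' : ℝ) (ht₁ : t₁ ∈ Set.Icc a b) (ht₁' : t₁' ∈ Set.Icc a b) (hne : t₁ ≠ t₁')
    (S : Finset ℝ)
    (hS : ∀ y ∈ S, y ∈ Set.Icc a b ∧ t₁ + y - t₁' ∈ Set.Icc a b ∧
      φ (t₁ + y - t₁') - φ t₁ - φ y + φ t₁' = 0) :
    S.card ≤ k - 1 := by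
  obtain ⟨n, rfl⟩ : ∃ n, k = n + 2 := ⟨k - 2, by omega⟩
  have hs : t₁ - t₁' ≠ 0 := sub_ne_zero.2 hne
  have h := sod_key n φ hφ hnd (t₁ - t₁') hs (φ t₁ - φ t₁') S ?_
  · omega
  · intro y hy
    obtain ⟨h1, h2, h3⟩ := hS y hy
    have hpt : y + (t₁ - t₁') = t₁ + y - t₁' := by ring
    rw [hpt]
    exact ⟨h1, h2, by linarith⟩
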